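/- arXiv:0912.1628 — 2 statements merged into one kernel-verified Lean document; each statement's English description precedes it below -/
import Mathlib

section
/- Let $A_T$ be an $n \times k$ real matrix with $\lambda_{\min}(A_T^\top A_T) \ge 1 - \delta$ for some $\delta \in [0,1)$, let $\sigma, \sigma_{sys} > 0$, and set $r = \sigma_{sys}^2 / \sigma^2$. Let $M_{prev}$ be a symmetric positive definite $k \times k$ real matrix, let $P = M_{prev}^{-1} \sigma^2 + \sigma_{sys}^2 I_k$, and let $M = A_T^\top A_T + \sigma^2 P^{-1}$. Then $\|M^{-1}\|_2 \le \frac{1}{1 - \delta + \frac{1}{\|M_{prev}^{-1}\|_2 + r}}$. -/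
open Matrix
open scoped InnerProductSpace

/-- Spectral norm (induced 2-norm) of a real matrix. -/
noncomputable def spectralNorm2 {m n : ℕ} (A : Matrix (Fin m) (Fin n) ℝ) : ℝ :=
  ‖LinearMap.toContinuousLinearMap (Matrix.toEuclideanLin A)‖

/-- Minimum eigenvalue of a symmetric (Hermitian) real matrix. -/
noncomputable def lambdaMin {k : ℕ} (M : Matrix (Fin k) (Fin k) ℝ) : ℝ :=
  if h : M.IsHermitian then ⨅ i, h.eigenvalues i else 0

lemma dp_self_nonneg {k : ℕ} (v : Fin k → ℝ) : 0 ≤ v ⬝ᵥ v :=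
  Finset.sum_nonneg fun _ _ => mul_self_nonneg _

lemma dp_sq_le {k : ℕ} (v w : Fin k → ℝ) : (v ⬝ᵥ w) ^ 2 ≤ (v ⬝ᵥ v) * (w ⬝ᵥ w) := by
  simpa [dotProduct, pow_two] using Finset.sum_mul_sq_le_sq_mul_sq Finset.univ v w

lemma real_transpose_eq {k : ℕ} {S : Matrix (Fin k) (Fin k) ℝ} (hS : S.IsHermitian) :
    Sᵀ = S := by
  ext i j
  rw [Matrix.transpose_apply]
  simpa using congrFun (congrFun hS.eq i) j

lemma herm_dp {k : ℕ} {S : Matrix (Fin k) (Fin k) ℝ} (hS : S.IsHermitian)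
    (v w : Fin k → ℝ) : (S *ᵥ v) ⬝ᵥ w = v ⬝ᵥ (S *ᵥ w) := by
  rw [Matrix.dotProduct_mulVec, ← Matrix.mulVec_transpose, real_transpose_eq hS]

lemma inner_dp {k : ℕ} (v w : Fin k → ℝ) :
    ⟪(WithLp.equiv 2 (Fin k → ℝ)).symm v, (WithLp.equiv 2 (Fin k → ℝ)).symm w⟫_ℝ = v ⬝ᵥ w := by
  simp [PiLp.inner_apply, dotProduct, mul_comm]

lemma quad_le {k : ℕ} (B : Matrix (Fin k) (Fin k) ℝ) (v : Fin k → ℝ) :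
    v ⬝ᵥ (B *ᵥ v) ≤ spectralNorm2 B * (v ⬝ᵥ v) := by
  set x : EuclideanSpace ℝ (Fin k) := (WithLp.equiv 2 (Fin k → ℝ)).symm v with hx
  have h1 : v ⬝ᵥ (B *ᵥ v) = ⟪x, (Matrix.toEuclideanLin B) x⟫_ℝ := by
    rw [hx, Matrix.toEuclideanLin_apply]
    exact (inner_dp v (B *ᵥ v)).symm
  have h2 : ⟪x, (Matrix.toEuclideanLin B) x⟫_ℝ ≤ ‖x‖ * ‖(Matrix.toEuclideanLin B) x‖ :=
    real_inner_le_norm _ _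
  have h3 : ‖(Matrix.toEuclideanLin B) x‖ ≤ spectralNorm2 B * ‖x‖ :=
    (LinearMap.toContinuousLinearMap (Matrix.toEuclideanLin B)).le_opNorm x
  have h4 : ‖x‖ * ‖x‖ = v ⬝ᵥ v := by
    rw [← real_inner_self_eq_norm_mul_norm, hx, inner_dp]
  calc v ⬝ᵥ (B *ᵥ v) ≤ ‖x‖ * ‖(Matrix.toEuclideanLin B) x‖ := h1 ▸ h2
    _ ≤ ‖x‖ * (spectralNorm2 B * ‖x‖) :=
        mul_le_mul_of_nonneg_left h3 (norm_nonneg x)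
    _ = spectralNorm2 B * (‖x‖ * ‖x‖) := by ring
    _ = spectralNorm2 B * (v ⬝ᵥ v) := by rw [h4]

lemma quad_ge {k : ℕ} {H : Matrix (Fin k) (Fin k) ℝ} (hH : H.IsHermitian) {c : ℝ}
    (hc : c ≤ lambdaMin H) (v : Fin k → ℝ) : c * (v ⬝ᵥ v) ≤ v ⬝ᵥ (H *ᵥ v) := by
  classical
  have hev : ∀ i, c ≤ hH.eigenvalues i := fun i => by
    refine hc.trans ?_
    rw [lambdaMin, dif_pos hH]
    exact ciInf_le (Set.Finite.bddBelow (Set.finite_range _)) i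
  have hpsd : (H - c • 1).PosSemidef := by
    have hU : (hH.eigenvectorUnitary : Matrix (Fin k) (Fin k) ℝ) *
        star (hH.eigenvectorUnitary : Matrix (Fin k) (Fin k) ℝ) = 1 :=
      Matrix.mem_unitaryGroup_iff.mp hH.eigenvectorUnitary.2
    have hdiag : H - c • 1 = (hH.eigenvectorUnitary : Matrix (Fin k) (Fin k) ℝ) *
        Matrix.diagonal (fun i => hH.eigenvalues i - c) *
        star (hH.eigenvectorUnitary : Matrix (Fin k) (Fin k) ℝ) := by
      have hd : Matrix.diagonal (fun i => hH.eigenvalues i - c) =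
          Matrix.diagonal (RCLike.ofReal ∘ hH.eigenvalues) - c • 1 := by
        rw [Matrix.smul_one_eq_diagonal, Matrix.diagonal_sub]
        rfl
      rw [hd, mul_sub, sub_mul]
      conv_lhs => rw [hH.spectral_theorem, Unitary.conjStarAlgAut_apply]
      congr 1
      rw [Matrix.mul_smul, Matrix.smul_mul, Matrix.mul_one, hU]
    rw [hdiag]
    exact (Matrix.posSemidef_diagonal_iff.mpr fun i =>
      sub_nonneg.mpr (hev i)).mul_mul_conjTranspose_same _
  have h0 := hpsd.dotProduct_mulVec_nonneg v
  simp only [Matrix.sub_mulVec, Matrix.smul_mulVec, Matrix.one_mulVec, dotProduct_sub,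
    dotProduct_smul, star_trivial, smul_eq_mul] at h0
  linarith

set_option maxHeartbeats 1000000 in
/-- recursive bound on `‖M_t⁻¹‖₂` when the support estimate does not
change, i.e. `P = M_prev⁻¹ σ² + σ_sys² I` and `M = A_Tᵀ A_T + σ² P⁻¹`:
`‖M⁻¹‖₂ ≤ 1 / (1 - δ + 1/(‖M_prev⁻¹‖₂ + r))` with `r = σ_sys²/σ²`. -/
theorem Minv_recursive_bound {n k : ℕ}
    (A_T : Matrix (Fin n) (Fin k) ℝ) (δ : ℝ) (hδ0 : 0 ≤ δ) (hδ1 : δ < 1)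
    (hmin : 1 - δ ≤ lambdaMin (A_Tᵀ * A_T))
    (σ σsys : ℝ) (hσ : 0 < σ) (hσsys : 0 < σsys)
    (r : ℝ) (hr : r = σsys ^ 2 / σ ^ 2)
    (Mprev : Matrix (Fin k) (Fin k) ℝ) (hMprev : Mprev.PosDef)
    (P : Matrix (Fin k) (Fin k) ℝ)
    (hP : P = σ ^ 2 • Mprev⁻¹ + σsys ^ 2 • (1 : Matrix (Fin k) (Fin k) ℝ))
    (M : Matrix (Fin k) (Fin k) ℝ) (hM : M = A_Tᵀ * A_T + σ ^ 2 • P⁻¹) :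
    spectralNorm2 M⁻¹ ≤ 1 / (1 - δ + 1 / (spectralNorm2 Mprev⁻¹ + r)) := by
  classical
  have hrpos : 0 < r := by rw [hr]; positivity
  have hsn0 : (0:ℝ) ≤ spectralNorm2 Mprev⁻¹ := norm_nonneg _
  set b : ℝ := spectralNorm2 Mprev⁻¹ + r with hb
  have hbpos : 0 < b := by positivity
  set c : ℝ := 1 - δ + 1 / b with hc
  have hcpos : 0 < c := by
    have : 0 < 1 - δ := by linarith
    positivity
  set Q : Matrix (Fin k) (Fin k) ℝ := Mprev⁻¹ + r • 1 with hQ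
  have hr1pd : (r • (1 : Matrix (Fin k) (Fin k) ℝ)).PosDef := by
    rw [Matrix.smul_one_eq_diagonal]
    exact Matrix.posDef_diagonal_iff.mpr fun _ => hrpos
  have hQpd : Q.PosDef := hMprev.inv.add hr1pd
  have hσ2 : (σ:ℝ) ^ 2 ≠ 0 := by positivity
  have hPQ : P = σ ^ 2 • Q := by
    rw [hP, hQ, smul_add, smul_smul]
    congr 2
    rw [hr]
    field_simp
  have hQdet : IsUnit Q.det := hQpd.det_pos.ne'.isUnit
  have hQinv : σ ^ 2 • P⁻¹ = Q⁻¹ := by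
    letI := invertibleOfNonzero hσ2
    have hsm : (σ ^ 2 • Q)⁻¹ = ⅟(σ ^ 2) • Q⁻¹ := Matrix.inv_smul (A := Q) (σ ^ 2) hQdet
    rw [hPQ, hsm, smul_smul, mul_invOf_self, one_smul]
  have hMQ : M = A_Tᵀ * A_T + Q⁻¹ := by rw [hM, hQinv]
  have hAps : (A_Tᵀ * A_T).PosSemidef := by
    have := Matrix.posSemidef_conjTranspose_mul_self A_T
    rwa [Matrix.conjTranspose_eq_transpose_of_trivial] at this
  have hQipd : Q⁻¹.PosDef := hQpd.inv
  have hMpd : M.PosDef := by rw [hMQ]; exact Matrix.PosDef.posSemidef_add hAps hQipd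
  have hMdet : IsUnit M.det := hMpd.det_pos.ne'.isUnit
  -- key quadratic lower bound
  have hkey : ∀ v : Fin k → ℝ, c * (v ⬝ᵥ v) ≤ v ⬝ᵥ (M *ᵥ v) := by
    intro v
    have hA1 : (1 - δ) * (v ⬝ᵥ v) ≤ v ⬝ᵥ ((A_Tᵀ * A_T) *ᵥ v) := quad_ge hAps.1 hmin v
    set S : Matrix (Fin k) (Fin k) ℝ := (open scoped MatrixOrder in CFC.sqrt Q) with hS
    have hSps : S.PosSemidef := open scoped MatrixOrder in (CFC.sqrt_nonneg Q).posSemidef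
    have hSS : S * S = Q := open scoped MatrixOrder in CFC.sqrt_mul_sqrt_self Q hQpd.posSemidef.nonneg
    have hSdet : IsUnit S.det := by
      have hdd : S.det * S.det = Q.det := by rw [← Matrix.det_mul, hSS]
      have hq := hQpd.det_pos
      refine (isUnit_iff_ne_zero).mpr fun h0 => ?_
      rw [h0, mul_zero] at hdd
      exact hq.ne' hdd.symm
    have hSinv : S * S⁻¹ = 1 := Matrix.mul_nonsing_inv _ hSdet
    have hQi : Q⁻¹ = S⁻¹ * S⁻¹ := by rw [← hSS, Matrix.mul_inv_rev]
    have hSh : S.IsHermitian := hSps.1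
    have hSih : (S⁻¹).IsHermitian := hSh.inv
    have e1 : (S *ᵥ v) ⬝ᵥ (S *ᵥ v) = v ⬝ᵥ (Q *ᵥ v) := by
      rw [herm_dp hSh, Matrix.mulVec_mulVec, hSS]
    have e2 : (S⁻¹ *ᵥ v) ⬝ᵥ (S⁻¹ *ᵥ v) = v ⬝ᵥ (Q⁻¹ *ᵥ v) := by
      rw [herm_dp hSih, Matrix.mulVec_mulVec, ← hQi]
    have e3 : (S *ᵥ v) ⬝ᵥ (S⁻¹ *ᵥ v) = v ⬝ᵥ v := by
      rw [herm_dp hSh, Matrix.mulVec_mulVec, hSinv, Matrix.one_mulVec]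
    have cs := dp_sq_le (S *ᵥ v) (S⁻¹ *ᵥ v)
    rw [e1, e2, e3] at cs
    have hQup : v ⬝ᵥ (Q *ᵥ v) ≤ b * (v ⬝ᵥ v) := by
      have h1 := quad_le Mprev⁻¹ v
      have h2 : v ⬝ᵥ (Q *ᵥ v) = v ⬝ᵥ (Mprev⁻¹ *ᵥ v) + r * (v ⬝ᵥ v) := by
        rw [hQ, Matrix.add_mulVec, dotProduct_add, Matrix.smul_mulVec,
          Matrix.one_mulVec, dotProduct_smul, smul_eq_mul]
      rw [h2, hb]
      nlinarith [dp_self_nonneg v]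
    have hQinvpos : 0 ≤ v ⬝ᵥ (Q⁻¹ *ᵥ v) := by rw [← e2]; exact dp_self_nonneg _
    have h2 : (1 / b) * (v ⬝ᵥ v) ≤ v ⬝ᵥ (Q⁻¹ *ᵥ v) := by
      rcases eq_or_lt_of_le (dp_self_nonneg v) with h | h
    -- v ⬝ᵥ v = 0 case
      · rw [← h, mul_zero]; exact hQinvpos
      · have hxx : (v ⬝ᵥ v) ^ 2 ≤ (b * (v ⬝ᵥ v)) * (v ⬝ᵥ (Q⁻¹ *ᵥ v)) :=
          cs.trans (mul_le_mul_of_nonneg_right hQup hQinvpos)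
        rw [div_mul_eq_mul_div, div_le_iff₀ hbpos]
        nlinarith
    rw [hMQ, Matrix.add_mulVec, dotProduct_add, hc]
    have : (1 - δ + 1 / b) * (v ⬝ᵥ v) = (1 - δ) * (v ⬝ᵥ v) + (1 / b) * (v ⬝ᵥ v) := by ring
    rw [this]
    exact add_le_add hA1 h2
  -- conclude on operator norm
  rw [show spectralNorm2 M⁻¹ = ‖LinearMap.toContinuousLinearMap (Matrix.toEuclideanLin M⁻¹)‖ from rfl]
  apply ContinuousLinearMap.opNorm_le_bound _ (by positivity)
  intro x
  set v : Fin k → ℝ := WithLp.equiv 2 (Fin k → ℝ) x with hv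
  set y : Fin k → ℝ := M⁻¹ *ᵥ v with hy
  have happ : LinearMap.toContinuousLinearMap (Matrix.toEuclideanLin M⁻¹) x =
      (WithLp.equiv 2 (Fin k → ℝ)).symm y := rfl
  have hMy : M *ᵥ y = v := by
    rw [hy, Matrix.mulVec_mulVec, Matrix.mul_nonsing_inv _ hMdet, Matrix.one_mulVec]
  have hq := hkey y
  rw [hMy] at hq
  have cs2 := dp_sq_le y v
  have hyy := dp_self_nonneg y
  have hvv := dp_self_nonneg v
  have key2 : c ^ 2 * (y ⬝ᵥ y) ≤ v ⬝ᵥ v := by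
    rcases eq_or_lt_of_le hyy with h | h
    · rw [← h, mul_zero]; exact hvv
    · have hyv : 0 ≤ y ⬝ᵥ v := le_trans (mul_nonneg hcpos.le hyy) hq
      have h1 : (c * (y ⬝ᵥ y)) ^ 2 ≤ (y ⬝ᵥ v) ^ 2 :=
        pow_le_pow_left₀ (mul_nonneg hcpos.le hyy) hq 2
      nlinarith [h1, cs2, h]
  have hny : ‖(WithLp.equiv 2 (Fin k → ℝ)).symm y‖ ^ 2 = y ⬝ᵥ y := by
    rw [← real_inner_self_eq_norm_sq, inner_dp]
  have hnx : ‖x‖ ^ 2 = v ⬝ᵥ v := by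
    rw [← real_inner_self_eq_norm_sq, show x = (WithLp.equiv 2 (Fin k → ℝ)).symm v from rfl,
      inner_dp]
  rw [happ]
  have hfin : c ^ 2 * ‖(WithLp.equiv 2 (Fin k → ℝ)).symm y‖ ^ 2 ≤ ‖x‖ ^ 2 := by
    rw [hny, hnx]; exact key2
  rw [div_mul_eq_mul_div, le_div_iff₀ hcpos]
  nlinarith [norm_nonneg ((WithLp.equiv 2 (Fin k → ℝ)).symm y), norm_nonneg x, hcpos]
end

section
/- (Core of the KF-CS convergence lemma.) Let $(\Omega, \mathcal{F}, \Pr)$ be a probability space and fix positive integers $k, n$ and an integer $t_*$. Let $J_t, \tilde{J}_t$ (for $t > t_*$) be deterministic $k \times k$ real matrices and $K_t, \tilde{K}_t$ deterministic $k \times n$ real matrices such that, as $t \to \infty$: $J_t \to J_*$, $\tilde{J}_t \to J_*$, $K_t \to K_*$, and $\tilde{K}_t \to K_*$, where the spectral radius of $J_*$ (the maximum modulus of its complex eigenvalues) is strictly less than $1$. Let $\tilde{e}_t, \nu_t$ be random vectors in $\mathbb{R}^k$ and $w_t$ random vectors in $\mathbb{R}^n$ with uniformly bounded second moments: $\sup_t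 \mathbb{E}[\|\tilde{e}_t\|_2^2] < \infty$, $\sup_t \mathbb{E}[\|\nu_t\|_2^2] < \infty$, $\sup_t \mathbb{E}[\|w_t\|_2^2] < \infty$. Let $d_t$ be random vectors in $\mathbb{R}^k$ with $\mathbb{E}[\|d_{t_*}\|_2^2] < \infty$ satisfying, almost surely for all $t > t_*$, $d_t = J_t d_{t-1} + (J_t - \tilde{J}_t)(\tilde{e}_{t-1} + \nu_t) + (\tilde{K}_t - K_t) w_t$. Then $d_t$ converges to zero in mean square: $\mathbb{E}[\|d_t\|_2^2] \to 0$ as $t \to \infty$; consequently, by Markov's inequality, $d_t \to 0$ in probability, i.e., for every $\epsilon, \epsilon_{err} > 0$ there exists $\tau$ such that $\Pr(\|d_t\|_2^2 \le \epsilon_{err}) > 1 - \epsilon$ for all $t \ge t_* + \tau$. -/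
open Matrix MeasureTheory Filter

/-- Matrix–vector multiplication, with the result regarded as an element of
Euclidean space (so that `‖·‖` is the Euclidean norm). -/
def mulVecE {m n : ℕ} (A : Matrix (Fin m) (Fin n) ℝ) (v : EuclideanSpace ℝ (Fin n)) :
    EuclideanSpace ℝ (Fin m) :=
  WithLp.toLp 2 (A.mulVec v)

namespace KFCS

noncomputable def matL {a b : ℕ} (A : Matrix (Fin a) (Fin b) ℝ) :
    EuclideanSpace ℝ (Fin b) →L[ℝ] EuclideanSpace ℝ (Fin a) :=
  LinearMap.toContinuousLinearMap
    { toFun := fun x => mulVecE A x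
      map_add' := fun x y => by
        simp [mulVecE, Matrix.mulVec_add]
      map_smul' := fun c x => by
        simp [mulVecE, Matrix.mulVec_smul] }

@[simp] lemma matL_apply {a b : ℕ} (A : Matrix (Fin a) (Fin b) ℝ)
    (x : EuclideanSpace ℝ (Fin b)) : matL A x = mulVecE A x := rfl

lemma matL_add {a b : ℕ} (A B : Matrix (Fin a) (Fin b) ℝ) :
    matL (A + B) = matL A + matL B := by
  ext x i
  show ((A + B).mulVec x.ofLp) i = (A.mulVec x.ofLp + B.mulVec x.ofLp) i
  rw [Matrix.add_mulVec]

lemma matL_smul {a b : ℕ} (c : ℝ) (A : Matrix (Fin a) (Fin b) ℝ) :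
    matL (c • A) = c • matL A := by
  ext x i
  show ((c • A).mulVec x.ofLp) i = (c • (A.mulVec x.ofLp)) i
  rw [Matrix.smul_mulVec]

lemma mulVecE_add {a b : ℕ} (A B : Matrix (Fin a) (Fin b) ℝ) (x : EuclideanSpace ℝ (Fin b)) :
    mulVecE (A + B) x = mulVecE A x + mulVecE B x := by
  have h := congrArg (fun L => L x) (matL_add A B)
  simpa using h

lemma norm_mulVecE_le {a b : ℕ} (A : Matrix (Fin a) (Fin b) ℝ) (x : EuclideanSpace ℝ (Fin b)) :
    ‖mulVecE A x‖ ≤ ‖matL A‖ * ‖x‖ :=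
  (matL A).le_opNorm x

noncomputable def matLin {a b : ℕ} :
    Matrix (Fin a) (Fin b) ℝ →ₗ[ℝ]
      (EuclideanSpace ℝ (Fin b) →L[ℝ] EuclideanSpace ℝ (Fin a)) :=
  { toFun := matL
    map_add' := matL_add
    map_smul' := matL_smul }

lemma matL_eq_sum {a b : ℕ} (A : Matrix (Fin a) (Fin b) ℝ) :
    matL A = ∑ i : Fin a, ∑ j : Fin b, A i j • matL (Matrix.single i j 1) := by
  have h0 : matL A = matLin A := rfl
  conv_lhs => rw [h0, matrix_eq_sum_single A]
  rw [map_sum]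
  refine Finset.sum_congr rfl fun i _ => ?_
  rw [map_sum]
  refine Finset.sum_congr rfl fun j _ => ?_
  have : Matrix.single i j (A i j) = A i j • Matrix.single i j 1 := by
    rw [smul_single, smul_eq_mul, mul_one]
  rw [this, _root_.map_smul]
  rfl

/-- convergence of matrices (pi topology) implies convergence of the operators. -/
lemma tendsto_matL {a b : ℕ} {M : ℤ → Matrix (Fin a) (Fin b) ℝ}
    {Mlim : Matrix (Fin a) (Fin b) ℝ} (hM : Tendsto M atTop (nhds Mlim)) :
    Tendsto (fun t => matL (M t)) atTop (nhds (matL Mlim)) := by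
  have hentry : ∀ i j, Tendsto (fun t => M t i j) atTop (nhds (Mlim i j)) := by
    intro i j
    have : Continuous fun A : Matrix (Fin a) (Fin b) ℝ => A i j :=
      (continuous_apply j).comp (continuous_apply i)
    exact (this.tendsto _).comp hM
  have : Tendsto (fun t => ∑ i : Fin a, ∑ j : Fin b, M t i j • matL (Matrix.single i j 1))
      atTop (nhds (∑ i : Fin a, ∑ j : Fin b, Mlim i j • matL (Matrix.single i j 1))) := by
    refine tendsto_finset_sum _ fun i _ => tendsto_finset_sum _ fun j _ => ?_
    exact (hentry i j).smul_const _
  simpa [← matL_eq_sum] using this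

lemma tendsto_matL_norm_zero {a b : ℕ} {M : ℤ → Matrix (Fin a) (Fin b) ℝ}
    (hM : Tendsto M atTop (nhds 0)) :
    Tendsto (fun t => ‖matL (M t)‖) atTop (nhds 0) := by
  have h := tendsto_matL hM
  have h0 : matL (0 : Matrix (Fin a) (Fin b) ℝ) = 0 := by
    ext x i
    show ((0 : Matrix (Fin a) (Fin b) ℝ).mulVec x.ofLp) i = 0
    rw [Matrix.zero_mulVec]
    rfl
  rw [h0] at h
  simpa using h.norm

section Spectral

attribute [local instance] Matrix.linftyOpNormedAddCommGroup Matrix.linftyOpNormedRing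
  Matrix.linftyOpNormedAlgebra Matrix.linftyOpNormedSpace

lemma linfty_nnnorm_map_ofReal {a : ℕ} (B : Matrix (Fin a) (Fin a) ℝ) :
    ‖B.map (Complex.ofReal : ℝ → ℂ)‖₊ = ‖B‖₊ := by
  rw [Matrix.linfty_opNNNorm_def, Matrix.linfty_opNNNorm_def]
  congr 1
  funext i
  exact Finset.sum_congr rfl fun j _ => by simp [Matrix.map_apply]

lemma exists_pow_contraction {a : ℕ} (Jstar : Matrix (Fin a) (Fin a) ℝ)
    (hspec : spectralRadius ℂ (Jstar.map (Complex.ofReal : ℝ → ℂ)) < 1) :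
    ∃ (N : ℕ) (ρ : ℝ), 0 < N ∧ 0 < ρ ∧ ρ < 1 ∧
      ∀ x : EuclideanSpace ℝ (Fin a), ‖mulVecE (Jstar ^ N) x‖ ≤ ρ ^ N * ‖x‖ := by
  classical
  haveI : CompleteSpace (Matrix (Fin a) (Fin a) ℂ) := FiniteDimensional.complete ℂ _
  set A := Jstar.map (Complex.ofReal : ℝ → ℂ) with hA
  have hG := spectrum.pow_nnnorm_pow_one_div_tendsto_nhds_spectralRadius A
  obtain ⟨c, hc1, hc2⟩ := exists_between hspec
  have hev : ∀ᶠ m : ℕ in atTop, ((‖A ^ m‖₊ : ENNReal) ^ (1 / (m:ℝ))) < c :=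
    hG.eventually_lt_const hc1
  obtain ⟨m, hm, hm1⟩ := (hev.and (eventually_ge_atTop 1)).exists
  have hmne : (m : ℝ) ≠ 0 := by exact_mod_cast Nat.one_le_iff_ne_zero.mp hm1
  -- raise both sides to the m-th power
  have hpow : (‖A ^ m‖₊ : ENNReal) ≤ c ^ (m : ℝ) := by
    calc (‖A ^ m‖₊ : ENNReal)
        = ((‖A ^ m‖₊ : ENNReal) ^ (1 / (m:ℝ))) ^ (m:ℝ) := by
          rw [← ENNReal.rpow_mul, one_div, inv_mul_cancel₀ hmne, ENNReal.rpow_one]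
      _ ≤ c ^ (m:ℝ) := ENNReal.rpow_le_rpow hm.le (by positivity)
  have hcne : c ≠ ⊤ := ne_top_of_lt hc2
  have hcpos : 0 < c := lt_of_le_of_lt zero_le hc1
  set cR := c.toReal with hcR
  have hcRpos : 0 < cR := ENNReal.toReal_pos hcpos.ne' hcne
  have hcRlt1 : cR < 1 := by
    have := (ENNReal.toReal_lt_toReal hcne ENNReal.one_ne_top).mpr hc2
    simpa using this
  -- transfer the norm bound to the real matrix
  have hAm : A ^ m = (Jstar ^ m).map (Complex.ofReal : ℝ → ℂ) := by
    have h1 : A = Complex.ofRealHom.mapMatrix Jstar := by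
      rw [hA, RingHom.mapMatrix_apply]; rfl
    rw [h1, ← map_pow, RingHom.mapMatrix_apply]; rfl
  have hnn : ‖A ^ m‖₊ = ‖Jstar ^ m‖₊ := by rw [hAm, linfty_nnnorm_map_ofReal]
  have hreal : ‖Jstar ^ m‖ ≤ cR ^ m := by
    have hpow' : (‖Jstar ^ m‖₊ : ENNReal) ≤ c ^ m := by
      rw [← hnn, ← ENNReal.rpow_natCast c m]; exact hpow
    have hfin : c ^ m ≠ ⊤ := by
      exact ENNReal.pow_ne_top hcne
    have := ENNReal.toReal_mono hfin hpow'
    simpa [ENNReal.toReal_pow] using this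
  -- constant comparing the operator norm with the linfty norm
  haveI : FiniteDimensional ℝ (Matrix (Fin a) (Fin a) ℝ) := by infer_instance
  have hent : ∀ (B : Matrix (Fin a) (Fin a) ℝ) (i j : Fin a), ‖B i j‖ ≤ ‖B‖ := by
    intro B i j
    have h : ‖B i j‖₊ ≤ ‖B‖₊ := by
      rw [Matrix.linfty_opNNNorm_def]
      exact (Finset.single_le_sum (f := fun j => ‖B i j‖₊) (fun _ _ => zero_le)
        (Finset.mem_univ j)).trans
        (Finset.le_sup (f := fun i => ∑ j, ‖B i j‖₊) (Finset.mem_univ i))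
    exact_mod_cast h
  set C := ∑ i : Fin a, ∑ j : Fin a, ‖matL (Matrix.single i j (1 : ℝ))‖ with hCdef
  have hC : ∀ B : Matrix (Fin a) (Fin a) ℝ, ‖matL B‖ ≤ C * ‖B‖ := fun B => by
    rw [matL_eq_sum B, Finset.sum_mul]
    refine (norm_sum_le _ _).trans (Finset.sum_le_sum fun i _ => ?_)
    rw [Finset.sum_mul]
    refine (norm_sum_le _ _).trans (Finset.sum_le_sum fun j _ => ?_)
    rw [norm_smul, mul_comm]
    exact mul_le_mul_of_nonneg_left (hent B i j) (norm_nonneg _)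
  have hC0 : 0 ≤ C := Finset.sum_nonneg fun i _ => Finset.sum_nonneg fun j _ => norm_nonneg _
  -- choose ρ and the power j
  set ρ := (1 + cR) / 2 with hρdef
  have hcRρ : cR < ρ := by rw [hρdef]; linarith
  have hρ1 : ρ < 1 := by rw [hρdef]; linarith
  have hρ0 : 0 < ρ := lt_trans hcRpos hcRρ
  have hq1 : 1 < (ρ / cR) ^ m := by
    apply one_lt_pow₀
    · exact (one_lt_div hcRpos).mpr hcRρ
    · exact Nat.one_le_iff_ne_zero.mp hm1
  obtain ⟨j, hjC, hj1⟩ :=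
    (((tendsto_pow_atTop_atTop_of_one_lt hq1).eventually_ge_atTop C).and
      (eventually_ge_atTop 1)).exists
  refine ⟨m * j, ρ, Nat.mul_pos (Nat.lt_of_lt_of_le Nat.zero_lt_one hm1)
    (Nat.lt_of_lt_of_le Nat.zero_lt_one hj1), hρ0, hρ1, fun x => ?_⟩
  have h1 : ‖mulVecE (Jstar ^ (m * j)) x‖ ≤ ‖matL (Jstar ^ (m * j))‖ * ‖x‖ :=
    (matL (Jstar ^ (m * j))).le_opNorm x
  have h2 : ‖Jstar ^ (m * j)‖ ≤ cR ^ (m * j) := by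
    calc ‖Jstar ^ (m * j)‖ = ‖(Jstar ^ m) ^ j‖ := by rw [pow_mul]
      _ ≤ ‖Jstar ^ m‖ ^ j := norm_pow_le' _ (Nat.lt_of_lt_of_le Nat.zero_lt_one hj1)
      _ ≤ (cR ^ m) ^ j := pow_le_pow_left₀ (norm_nonneg _) hreal j
      _ = cR ^ (m * j) := by rw [← pow_mul]
  have h3 : C * cR ^ (m * j) ≤ ρ ^ (m * j) := by
    have hqj : ((ρ / cR) ^ m) ^ j = ρ ^ (m * j) / cR ^ (m * j) := by
      rw [← pow_mul, div_pow]
    rw [hqj] at hjC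
    exact (le_div_iff₀ (pow_pos hcRpos _)).mp hjC
  calc ‖mulVecE (Jstar ^ (m * j)) x‖ ≤ ‖matL (Jstar ^ (m * j))‖ * ‖x‖ := h1
    _ ≤ (C * ‖Jstar ^ (m * j)‖) * ‖x‖ :=
        mul_le_mul_of_nonneg_right (hC _) (norm_nonneg x)
    _ ≤ (C * cR ^ (m * j)) * ‖x‖ := by
        apply mul_le_mul_of_nonneg_right _ (norm_nonneg x)
        exact mul_le_mul_of_nonneg_left h2 hC0
    _ ≤ ρ ^ (m * j) * ‖x‖ := mul_le_mul_of_nonneg_right h3 (norm_nonneg x)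

end Spectral

lemma scalar_decay {x c : ℤ → ℝ} {ρ : ℝ} (hρ0 : 0 ≤ ρ) (hρ1 : ρ < 1) (T0 : ℤ)
    (hx0 : ∀ t, 0 ≤ x t)
    (hrec : ∀ t, T0 < t → x t ≤ ρ * x (t - 1) + c t)
    (hc : Tendsto c atTop (nhds 0)) : Tendsto x atTop (nhds 0) := by
  rw [Metric.tendsto_atTop]
  intro ε hε
  have hκ : 0 < ε * (1 - ρ) / 4 := by
    have : 0 < 1 - ρ := by linarith
    positivity
  rw [Metric.tendsto_atTop] at hc
  obtain ⟨T1', hT1'⟩ := hc _ hκ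
  set T1 := max T1' (T0 + 1) with hT1def
  have hT1c : ∀ t ≥ T1, c t ≤ ε * (1 - ρ) / 4 := by
    intro t ht
    have := hT1' t (le_trans (le_max_left _ _) ht)
    rw [Real.dist_eq, sub_zero] at this
    exact (le_abs_self _).trans this.le
  -- invariant
  have key : ∀ m : ℕ, x (T1 + m) ≤ ρ ^ m * x T1 + ε / 4 := by
    intro m
    induction m with
    | zero => simp; linarith [hx0 T1, hε]
    | succ m ih =>
      have ht : T0 < T1 + (m + 1 : ℕ) := by
        have : T0 + 1 ≤ T1 := le_max_right _ _
        push_cast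
        omega
      have hrec' := hrec (T1 + (m + 1 : ℕ)) ht
      have hsub : (T1 + (m + 1 : ℕ)) - 1 = T1 + m := by push_cast; ring
      rw [hsub] at hrec'
      have hct : c (T1 + (m + 1 : ℕ)) ≤ ε * (1 - ρ) / 4 := by
        apply hT1c
        have : (0:ℤ) ≤ (m + 1 : ℕ) := by positivity
        omega
      have : x (T1 + (m + 1 : ℕ)) ≤ ρ * (ρ ^ m * x T1 + ε / 4) + ε * (1 - ρ) / 4 := by
        refine hrec'.trans (add_le_add (mul_le_mul_of_nonneg_left ih hρ0) hct)
      calc x (T1 + (m + 1 : ℕ)) ≤ ρ * (ρ ^ m * x T1 + ε / 4) + ε * (1 - ρ) / 4 := this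
        _ = ρ ^ (m + 1) * x T1 + (ρ * ε / 4 + ε * (1 - ρ) / 4) := by ring
        _ ≤ ρ ^ (m + 1) * x T1 + ε / 4 := by
            apply add_le_add_right
            nlinarith
  -- choose m0 with ρ ^ m0 * x T1 < ε / 2
  have hpow0 : Tendsto (fun m : ℕ => ρ ^ m * x T1) atTop (nhds 0) := by
    simpa using (tendsto_pow_atTop_nhds_zero_of_lt_one hρ0 hρ1).mul_const (x T1)
  obtain ⟨m0, hm0⟩ := (hpow0.eventually_lt_const (by linarith : (0:ℝ) < ε / 2)).exists
  refine ⟨T1 + m0, fun t ht => ?_⟩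
  have htT1 : T1 ≤ t := by
    have : (0:ℤ) ≤ (m0:ℤ) := by positivity
    omega
  set m := (t - T1).toNat with hm
  have htm : t = T1 + m := by omega
  have hmm0 : m0 ≤ m := by omega
  have h1 : x t ≤ ρ ^ m * x T1 + ε / 4 := htm ▸ key m
  have h2 : ρ ^ m * x T1 ≤ ρ ^ m0 * x T1 :=
    mul_le_mul_of_nonneg_right (pow_le_pow_of_le_one hρ0 hρ1.le hmm0) (hx0 T1)
  rw [Real.dist_eq, sub_zero, abs_of_nonneg (hx0 t)]
  calc x t ≤ ρ ^ m * x T1 + ε / 4 := h1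
    _ ≤ ρ ^ m0 * x T1 + ε / 4 := by linarith
    _ < ε / 2 + ε / 4 := by linarith
    _ < ε := by linarith

variable {Ω : Type*} [MeasurableSpace Ω] {P : Measure Ω}
variable {E : Type*} [NormedAddCommGroup E]

lemma eLpNorm_two_eq {f : Ω → E} (hf : MemLp f 2 P) :
    eLpNorm f 2 P = ENNReal.ofReal ((∫ ω, ‖f ω‖ ^ 2 ∂P) ^ (2⁻¹ : ℝ)) := by
  rw [hf.eLpNorm_eq_integral_rpow_norm two_ne_zero ENNReal.ofNat_ne_top]
  simp only [ENNReal.toReal_ofNat, Real.rpow_two]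

lemma toReal_eLpNorm_two {f : Ω → E} (hf : MemLp f 2 P) :
    (eLpNorm f 2 P).toReal = (∫ ω, ‖f ω‖ ^ 2 ∂P) ^ (2⁻¹ : ℝ) := by
  rw [eLpNorm_two_eq hf, ENNReal.toReal_ofReal]
  exact Real.rpow_nonneg (integral_nonneg fun ω => by positivity) _

lemma integral_sq_eq_toReal_sq {f : Ω → E} (hf : MemLp f 2 P) :
    ∫ ω, ‖f ω‖ ^ 2 ∂P = (eLpNorm f 2 P).toReal ^ 2 := by
  have hI : 0 ≤ ∫ ω, ‖f ω‖ ^ 2 ∂P := integral_nonneg fun ω => by positivity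
  rw [toReal_eLpNorm_two hf, ← Real.rpow_two, ← Real.rpow_mul hI]
  norm_num

lemma eLpNorm_le_of_integral_sq_le {f : Ω → E} {B : ℝ} (hf : MemLp f 2 P)
    (hB : ∫ ω, ‖f ω‖ ^ 2 ∂P ≤ B) :
    eLpNorm f 2 P ≤ ENNReal.ofReal ((max B 0) ^ (2⁻¹ : ℝ)) := by
  rw [eLpNorm_two_eq hf]
  apply ENNReal.ofReal_le_ofReal
  apply Real.rpow_le_rpow (integral_nonneg fun ω => by positivity)
    (hB.trans (le_max_left _ _)) (by norm_num)

lemma eLpNorm_clm_comp {F' : Type*} [NormedAddCommGroup F'] [NormedSpace ℝ F']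
    [NormedSpace ℝ E] (L : E →L[ℝ] F') {f : Ω → E} (hf : AEStronglyMeasurable f P) :
    eLpNorm (fun ω => L (f ω)) 2 P ≤ (‖L‖₊ : ENNReal) * eLpNorm f 2 P := by
  have h1 : eLpNorm (fun ω => L (f ω)) 2 P ≤ eLpNorm (fun ω => ‖L‖ * ‖f ω‖) 2 P := by
    apply eLpNorm_mono_ae
    refine Filter.Eventually.of_forall fun ω => ?_
    rw [Real.norm_eq_abs, abs_of_nonneg (by positivity)]
    exact L.le_opNorm (f ω)
  refine h1.trans_eq ?_
  have h2 : (fun ω => ‖L‖ * ‖f ω‖) = (‖L‖ : ℝ) • fun ω => ‖f ω‖ := rfl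
  rw [h2, eLpNorm_const_smul, eLpNorm_norm]
  congr 1
  rw [enorm_eq_nnnorm, nnnorm_norm]

lemma coe_nnnorm_sq_eq {x : E} :
    ((‖x‖₊ : ENNReal)) ^ (2 : ℝ) = ENNReal.ofReal (‖x‖ ^ 2) := by
  rw [← enorm_eq_nnnorm, ← ofReal_norm, ENNReal.ofReal_rpow_of_nonneg (norm_nonneg _)
    (by norm_num : (0:ℝ) ≤ 2), Real.rpow_two]

/-- Markov-type conclusion. -/
lemma prob_sq_le {f : Ω → E} [IsProbabilityMeasure P] (hf : MemLp f 2 P)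
    {ε εerr : ℝ} (hε : 0 < ε) (hεerr : 0 < εerr)
    (hI : ∫ ω, ‖f ω‖ ^ 2 ∂P < εerr * ε) :
    1 - ε < (P {ω | ‖f ω‖ ^ 2 ≤ εerr}).toReal := by
  have hI0 : 0 ≤ ∫ ω, ‖f ω‖ ^ 2 ∂P := integral_nonneg fun ω => by positivity
  set Bad := {ω | ENNReal.ofReal εerr ≤ (‖f ω‖₊ : ENNReal) ^ (2 : ENNReal).toReal} with hBad
  set Good := {ω | ‖f ω‖ ^ 2 ≤ εerr} with hGood
  have hmarkov := mul_meas_ge_le_pow_eLpNorm P two_ne_zero ENNReal.ofNat_ne_top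
    hf.aestronglyMeasurable (ENNReal.ofReal εerr)
  have h2 : (2 : ENNReal).toReal = (2 : ℝ) := by simp
  have hsnorm : eLpNorm f 2 P ^ (2 : ENNReal).toReal
      = ENNReal.ofReal (∫ ω, ‖f ω‖ ^ 2 ∂P) := by
    rw [h2, eLpNorm_two_eq hf, ENNReal.ofReal_rpow_of_nonneg (Real.rpow_nonneg hI0 _)
      (by norm_num : (0:ℝ) ≤ 2), ← Real.rpow_mul hI0]
    norm_num
  rw [hsnorm] at hmarkov
  have hPBad : P Bad < ENNReal.ofReal ε := by
    have h3 : P Bad ≤ ENNReal.ofReal (∫ ω, ‖f ω‖ ^ 2 ∂P) / ENNReal.ofReal εerr := by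
      rw [ENNReal.le_div_iff_mul_le (Or.inl (by simp [hεerr])) (Or.inl ENNReal.ofReal_ne_top)]
      rw [mul_comm]
      exact hmarkov
    refine h3.trans_lt ?_
    rw [← ENNReal.ofReal_div_of_pos hεerr]
    apply ENNReal.ofReal_lt_ofReal_iff_of_nonneg (by positivity) |>.mpr
    rw [div_lt_iff₀ hεerr]
    linarith [hI]
  have hcover : (1 : ENNReal) ≤ P Good + P Bad := by
    have hsub : (Set.univ : Set Ω) ⊆ Good ∪ Bad := by
      intro ω _
      by_cases h : ‖f ω‖ ^ 2 ≤ εerr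
      · exact Or.inl h
      · right
        show ENNReal.ofReal εerr ≤ (‖f ω‖₊ : ENNReal) ^ (2 : ENNReal).toReal
        rw [h2, coe_nnnorm_sq_eq]
        exact ENNReal.ofReal_le_ofReal (le_of_lt (not_le.mp h))
    calc (1 : ENNReal) = P Set.univ := (measure_univ).symm
      _ ≤ P (Good ∪ Bad) := measure_mono hsub
      _ ≤ P Good + P Bad := measure_union_le _ _
  have hbadR : (P Bad).toReal < ε := ENNReal.toReal_lt_of_lt_ofReal hPBad
  have hsumR : 1 ≤ (P Good).toReal + (P Bad).toReal := by
    have hfin : P Good + P Bad ≠ ⊤ := by finiteness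
    have := ENNReal.toReal_mono hfin hcover
    rwa [ENNReal.toReal_one, ENNReal.toReal_add (measure_ne_top _ _) (measure_ne_top _ _)] at this
  linarith


end KFCS

/-- core of the KF-CS convergence lemma. If the deterministic gain
and transition matrices of two Kalman filters converge to common limits, the limit
transition matrix `J_*` has spectral radius `< 1`, the driving random processes
have uniformly bounded second moments, and `d_t` satisfies the stated recursion,
then `d_t → 0` in mean square, and consequently in probability. -/
theorem kfcs_converges_to_genie_kf {Ω : Type*} [MeasurableSpace Ω]
    (P : Measure Ω) [IsProbabilityMeasure P]
    (k n : ℕ) (hk : 0 < k) (hn : 0 < n) (tstar : ℤ)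
    (J Jtil : ℤ → Matrix (Fin k) (Fin k) ℝ)
    (K Ktil : ℤ → Matrix (Fin k) (Fin n) ℝ)
    (Jstar : Matrix (Fin k) (Fin k) ℝ) (Kstar : Matrix (Fin k) (Fin n) ℝ)
    (hJconv : Tendsto J atTop (nhds Jstar))
    (hJtilconv : Tendsto Jtil atTop (nhds Jstar))
    (hKconv : Tendsto K atTop (nhds Kstar))
    (hKtilconv : Tendsto Ktil atTop (nhds Kstar))
    (hspec : spectralRadius ℂ (Jstar.map (Complex.ofReal : ℝ → ℂ)) < 1)
    (etil ν : ℤ → Ω → EuclideanSpace ℝ (Fin k))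
    (w : ℤ → Ω → EuclideanSpace ℝ (Fin n))
    (hetil2 : ∀ t, MemLp (etil t) 2 P)
    (hν2 : ∀ t, MemLp (ν t) 2 P)
    (hw2 : ∀ t, MemLp (w t) 2 P)
    (hetilB : ∃ B : ℝ, ∀ t, ∫ ω, ‖etil t ω‖ ^ 2 ∂P ≤ B)
    (hνB : ∃ B : ℝ, ∀ t, ∫ ω, ‖ν t ω‖ ^ 2 ∂P ≤ B)
    (hwB : ∃ B : ℝ, ∀ t, ∫ ω, ‖w t ω‖ ^ 2 ∂P ≤ B)
    (d : ℤ → Ω → EuclideanSpace ℝ (Fin k))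
    (hdstar : MemLp (d tstar) 2 P)
    (hrec : ∀ᵐ ω ∂P, ∀ t, tstar < t →
      d t ω = mulVecE (J t) (d (t - 1) ω) +
        mulVecE (J t - Jtil t) (etil (t - 1) ω + ν t ω) +
        mulVecE (Ktil t - K t) (w t ω)) :
    Tendsto (fun t : ℤ => ∫ ω, ‖d t ω‖ ^ 2 ∂P) atTop (nhds 0) ∧
    ∀ ε εerr : ℝ, 0 < ε → 0 < εerr → ∃ τ : ℤ, ∀ t, tstar + τ ≤ t →
      1 - ε < (P {ω | ‖d t ω‖ ^ 2 ≤ εerr}).toReal := by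
  classical
  obtain ⟨N, ρ0, hNpos, hρ0pos, hρ0lt1, hpowN⟩ := KFCS.exists_pow_contraction Jstar hspec
  -- the adapted norm-like functional F
  set F : EuclideanSpace ℝ (Fin k) → ℝ :=
    fun x => ∑ i ∈ Finset.range N, ρ0⁻¹ ^ i * ‖mulVecE (Jstar ^ i) x‖ with hFdef
  have hF0 : ∀ x, 0 ≤ F x := fun x =>
    Finset.sum_nonneg fun i _ => mul_nonneg (by positivity) (norm_nonneg _)
  have hmul1 : ∀ x : EuclideanSpace ℝ (Fin k), mulVecE (Jstar ^ 0) x = x := by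
    intro x
    simp [mulVecE]
  have hFnorm : ∀ x, ‖x‖ ≤ F x := by
    intro x
    have h : ρ0⁻¹ ^ 0 * ‖mulVecE (Jstar ^ 0) x‖ ≤ F x :=
      Finset.single_le_sum (f := fun i => ρ0⁻¹ ^ i * ‖mulVecE (Jstar ^ i) x‖)
        (fun i _ => mul_nonneg (by positivity) (norm_nonneg _))
        (Finset.mem_range.mpr hNpos)
    calc ‖x‖ = ρ0⁻¹ ^ 0 * ‖mulVecE (Jstar ^ 0) x‖ := by rw [pow_zero, one_mul, hmul1 x]
      _ ≤ F x := h
  have hFadd : ∀ x y, F (x + y) ≤ F x + F y := by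
    intro x y
    rw [hFdef]
    simp only
    rw [← Finset.sum_add_distrib]
    apply Finset.sum_le_sum
    intro i _
    have hadd : mulVecE (Jstar ^ i) (x + y) = mulVecE (Jstar ^ i) x + mulVecE (Jstar ^ i) y :=
      (KFCS.matL (Jstar ^ i)).map_add x y
    rw [hadd, ← mul_add]
    exact mul_le_mul_of_nonneg_left (norm_add_le _ _) (by positivity)
  set Cf : ℝ := (∑ i ∈ Finset.range N, ρ0⁻¹ ^ i * ‖KFCS.matL (Jstar ^ i)‖) + 1 with hCf
  have hsum0 : 0 ≤ ∑ i ∈ Finset.range N, ρ0⁻¹ ^ i * ‖KFCS.matL (Jstar ^ i)‖ :=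
    Finset.sum_nonneg fun i _ => mul_nonneg (by positivity) (norm_nonneg _)
  have hCfpos : 0 < Cf := by rw [hCf]; linarith
  have hFle : ∀ x, F x ≤ Cf * ‖x‖ := by
    intro x
    have h1 : F x ≤ (∑ i ∈ Finset.range N, ρ0⁻¹ ^ i * ‖KFCS.matL (Jstar ^ i)‖) * ‖x‖ := by
      rw [Finset.sum_mul]
      apply Finset.sum_le_sum
      intro i _
      rw [mul_assoc]
      exact mul_le_mul_of_nonneg_left ((KFCS.matL (Jstar ^ i)).le_opNorm x) (by positivity)
    refine h1.trans (mul_le_mul_of_nonneg_right ?_ (norm_nonneg x))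
    rw [hCf]; linarith
  have hFJ : ∀ x, F (mulVecE Jstar x) ≤ ρ0 * F x := by
    intro x
    set g : ℕ → ℝ := fun i => ρ0⁻¹ ^ i * ‖mulVecE (Jstar ^ i) x‖ with hg
    have hstep : ∀ i : ℕ, ρ0⁻¹ ^ i * ‖mulVecE (Jstar ^ i) (mulVecE Jstar x)‖ = ρ0 * g (i + 1) := by
      intro i
      have hmm : mulVecE (Jstar ^ i) (mulVecE Jstar x) = mulVecE (Jstar ^ (i + 1)) x := by
        show WithLp.toLp 2 ((Jstar ^ i).mulVec (Jstar.mulVec x.ofLp)) = WithLp.toLp 2 ((Jstar ^ (i + 1)).mulVec x.ofLp)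
        rw [Matrix.mulVec_mulVec, ← pow_succ]
      rw [hmm, hg]
      simp only
      have hcancel : ρ0 * ρ0⁻¹ ^ (i + 1) = ρ0⁻¹ ^ i := by
        rw [pow_succ, mul_comm (ρ0⁻¹ ^ i), ← mul_assoc, mul_inv_cancel₀ hρ0pos.ne', one_mul]
      rw [← mul_assoc, hcancel]
    have hsum : F (mulVecE Jstar x) = ρ0 * ∑ i ∈ Finset.range N, g (i + 1) := by
      rw [hFdef]
      simp only
      rw [Finset.mul_sum]
      exact Finset.sum_congr rfl fun i _ => hstep i
    have hshift : ∑ i ∈ Finset.range N, g (i + 1)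
        = (∑ i ∈ Finset.range N, g i) + g N - g 0 := by
      have h1 : ∑ i ∈ Finset.range (N + 1), g i
          = (∑ i ∈ Finset.range N, g (i + 1)) + g 0 := Finset.sum_range_succ' g N
      have h2 : ∑ i ∈ Finset.range (N + 1), g i
          = (∑ i ∈ Finset.range N, g i) + g N := Finset.sum_range_succ g N
      linarith
    have hgN : g N ≤ g 0 := by
      rw [hg]
      simp only
      rw [pow_zero, one_mul, hmul1 x]
      calc ρ0⁻¹ ^ N * ‖mulVecE (Jstar ^ N) x‖
          ≤ ρ0⁻¹ ^ N * (ρ0 ^ N * ‖x‖) :=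
            mul_le_mul_of_nonneg_left (hpowN x) (by positivity)
        _ = ‖x‖ := by
            rw [← mul_assoc, ← mul_pow, inv_mul_cancel₀ hρ0pos.ne', one_pow, one_mul]
    have hFx : F x = ∑ i ∈ Finset.range N, g i := rfl
    rw [hsum, hshift, hFx]
    have h3 : (∑ i ∈ Finset.range N, g i) + g N - g 0 ≤ ∑ i ∈ Finset.range N, g i := by
      linarith
    exact mul_le_mul_of_nonneg_left h3 hρ0pos.le
  have hFmat : ∀ (B : Matrix (Fin k) (Fin k) ℝ) (x : EuclideanSpace ℝ (Fin k)),
      F (mulVecE B x) ≤ (ρ0 + Cf * ‖KFCS.matL (B - Jstar)‖) * F x := by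
    intro B x
    have hsplit : mulVecE B x = mulVecE Jstar x + mulVecE (B - Jstar) x := by
      have hJB : Jstar + (B - Jstar) = B := by abel
      rw [← KFCS.mulVecE_add, hJB]
    calc F (mulVecE B x) = F (mulVecE Jstar x + mulVecE (B - Jstar) x) := by rw [← hsplit]
      _ ≤ F (mulVecE Jstar x) + F (mulVecE (B - Jstar) x) := hFadd _ _
      _ ≤ ρ0 * F x + Cf * ‖mulVecE (B - Jstar) x‖ := add_le_add (hFJ x) (hFle _)
      _ ≤ ρ0 * F x + Cf * (‖KFCS.matL (B - Jstar)‖ * ‖x‖) := by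
          refine add_le_add_right (mul_le_mul_of_nonneg_left ?_ hCfpos.le) _
          exact (KFCS.matL (B - Jstar)).le_opNorm x
      _ ≤ ρ0 * F x + Cf * ‖KFCS.matL (B - Jstar)‖ * F x := by
          rw [← mul_assoc]
          exact add_le_add_right
            (mul_le_mul_of_nonneg_left (hFnorm x)
              (mul_nonneg hCfpos.le (norm_nonneg _))) _
      _ = (ρ0 + Cf * ‖KFCS.matL (B - Jstar)‖) * F x := by ring
  have hFcont : Continuous F := by
    apply continuous_finset_sum
    intro i _
    exact continuous_const.mul ((KFCS.matL (Jstar ^ i)).continuous.norm)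
  -- the driving noise process
  set u : ℤ → Ω → EuclideanSpace ℝ (Fin k) := fun t ω =>
    mulVecE (J t - Jtil t) (etil (t - 1) ω + ν t ω) + mulVecE (Ktil t - K t) (w t ω) with hu
  have hu2 : ∀ t, MemLp (u t) 2 P := by
    intro t
    exact MemLp.add
      ((KFCS.matL (J t - Jtil t)).comp_memLp' ((hetil2 (t - 1)).add (hν2 t)))
      ((KFCS.matL (Ktil t - K t)).comp_memLp' (hw2 t))
  have hd2 : ∀ m : ℕ, MemLp (d (tstar + m)) 2 P := by
    intro m
    induction m with
    | zero => simpa using hdstar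
    | succ m ih =>
      have ht : tstar < tstar + ((m : ℤ) + 1) := by omega
      have hsub : tstar + ((m : ℤ) + 1) - 1 = tstar + m := by ring
      have heq : (fun ω => mulVecE (J (tstar + ((m : ℤ) + 1))) (d (tstar + (m : ℤ)) ω)
          + u (tstar + ((m : ℤ) + 1)) ω) =ᵐ[P] d (tstar + ((m : ℤ) + 1)) := by
        filter_upwards [hrec] with ω hω
        rw [hω _ ht, hu]
        simp only
        rw [add_assoc, hsub]
      have hmem : MemLp (fun ω => mulVecE (J (tstar + ((m : ℤ) + 1))) (d (tstar + (m : ℤ)) ω)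
          + u (tstar + ((m : ℤ) + 1)) ω) 2 P :=
        MemLp.add ((KFCS.matL (J (tstar + ((m : ℤ) + 1)))).comp_memLp' ih) (hu2 _)
      have := MemLp.ae_eq heq hmem
      have hcast : tstar + ((m : ℤ) + 1) = tstar + ((m + 1 : ℕ) : ℤ) := by push_cast; ring
      rwa [hcast] at this
  have hd2' : ∀ t : ℤ, tstar ≤ t → MemLp (d t) 2 P := by
    intro t ht
    have h' : tstar + ((t - tstar).toNat : ℤ) = t := by omega
    have := hd2 (t - tstar).toNat
    rwa [h'] at this
  -- uniform bounds on the second moments, in eLpNorm form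
  obtain ⟨Be, hBe⟩ := hetilB
  obtain ⟨Bν, hBν⟩ := hνB
  obtain ⟨Bw, hBw⟩ := hwB
  set Me : ENNReal := ENNReal.ofReal ((max Be 0) ^ (2⁻¹ : ℝ)) with hMe
  set Mν : ENNReal := ENNReal.ofReal ((max Bν 0) ^ (2⁻¹ : ℝ)) with hMν
  set Mw : ENNReal := ENNReal.ofReal ((max Bw 0) ^ (2⁻¹ : ℝ)) with hMw
  have hetilM : ∀ t, eLpNorm (etil t) 2 P ≤ Me := fun t =>
    KFCS.eLpNorm_le_of_integral_sq_le (hetil2 t) (hBe t)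
  have hνM : ∀ t, eLpNorm (ν t) 2 P ≤ Mν := fun t =>
    KFCS.eLpNorm_le_of_integral_sq_le (hν2 t) (hBν t)
  have hwM : ∀ t, eLpNorm (w t) 2 P ≤ Mw := fun t =>
    KFCS.eLpNorm_le_of_integral_sq_le (hw2 t) (hBw t)
  -- eLpNorm (u t) tends to zero
  have hJJtil : Tendsto (fun t => J t - Jtil t) atTop (nhds 0) := by
    simpa using hJconv.sub hJtilconv
  have hKKtil : Tendsto (fun t => Ktil t - K t) atTop (nhds 0) := by
    simpa using hKtilconv.sub hKconv
  have hbound : ∀ t, eLpNorm (u t) 2 P ≤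
      (‖KFCS.matL (J t - Jtil t)‖₊ : ENNReal) * (Me + Mν)
        + (‖KFCS.matL (Ktil t - K t)‖₊ : ENNReal) * Mw := by
    intro t
    have h1 : eLpNorm (u t) 2 P ≤
        eLpNorm (fun ω => mulVecE (J t - Jtil t) (etil (t - 1) ω + ν t ω)) 2 P
          + eLpNorm (fun ω => mulVecE (Ktil t - K t) (w t ω)) 2 P := by
      rw [hu]
      exact eLpNorm_add_le
        ((KFCS.matL (J t - Jtil t)).comp_memLp' ((hetil2 (t - 1)).add (hν2 t))).aestronglyMeasurable
        ((KFCS.matL (Ktil t - K t)).comp_memLp' (hw2 t)).aestronglyMeasurable one_le_two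
    have h2 : eLpNorm (fun ω => mulVecE (J t - Jtil t) (etil (t - 1) ω + ν t ω)) 2 P ≤
        (‖KFCS.matL (J t - Jtil t)‖₊ : ENNReal) * (Me + Mν) := by
      refine (KFCS.eLpNorm_clm_comp (KFCS.matL (J t - Jtil t))
        ((hetil2 (t - 1)).add (hν2 t)).aestronglyMeasurable).trans ?_
      apply mul_le_mul_right ((eLpNorm_add_le (hetil2 (t - 1)).aestronglyMeasurable
        (hν2 t).aestronglyMeasurable one_le_two).trans (add_le_add (hetilM _) (hνM _)))
    have h3 : eLpNorm (fun ω => mulVecE (Ktil t - K t) (w t ω)) 2 P ≤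
        (‖KFCS.matL (Ktil t - K t)‖₊ : ENNReal) * Mw := by
      refine (KFCS.eLpNorm_clm_comp (KFCS.matL (Ktil t - K t))
        (hw2 t).aestronglyMeasurable).trans ?_
      exact mul_le_mul_right (hwM t) _
    exact h1.trans (add_le_add h2 h3)
  have hnn1 : Tendsto (fun t => (‖KFCS.matL (J t - Jtil t)‖₊ : ENNReal)) atTop (nhds 0) := by
    have hr := KFCS.tendsto_matL_norm_zero hJJtil
    have := ENNReal.tendsto_ofReal (a := 0) hr
    rw [ENNReal.ofReal_zero] at this
    refine this.congr fun t => ?_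
    rw [ofReal_norm, enorm_eq_nnnorm]
  have hnn2 : Tendsto (fun t => (‖KFCS.matL (Ktil t - K t)‖₊ : ENNReal)) atTop (nhds 0) := by
    have hr := KFCS.tendsto_matL_norm_zero hKKtil
    have := ENNReal.tendsto_ofReal (a := 0) hr
    rw [ENNReal.ofReal_zero] at this
    refine this.congr fun t => ?_
    rw [ofReal_norm, enorm_eq_nnnorm]
  have hMefin : Me + Mν ≠ ⊤ := by finiteness
  have hMwfin : Mw ≠ ⊤ := by finiteness
  have hulim : Tendsto (fun t => eLpNorm (u t) 2 P) atTop (nhds 0) := by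
    have hb : Tendsto (fun t => (‖KFCS.matL (J t - Jtil t)‖₊ : ENNReal) * (Me + Mν)
        + (‖KFCS.matL (Ktil t - K t)‖₊ : ENNReal) * Mw) atTop (nhds 0) := by
      have h1 := ENNReal.Tendsto.mul_const hnn1 (Or.inr hMefin)
      have h2 := ENNReal.Tendsto.mul_const hnn2 (Or.inr hMwfin)
      rw [zero_mul] at h1 h2
      simpa using h1.add h2
    exact tendsto_of_tendsto_of_tendsto_of_le_of_le tendsto_const_nhds hb
      (fun t => zero_le) hbound
  -- composition bound for F
  have hFcomp : ∀ g : Ω → EuclideanSpace ℝ (Fin k), AEStronglyMeasurable g P →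
      eLpNorm (fun ω => F (g ω)) 2 P ≤ ENNReal.ofReal Cf * eLpNorm g 2 P := by
    intro g hg
    have h1 : eLpNorm (fun ω => F (g ω)) 2 P ≤ eLpNorm (fun ω => Cf * ‖g ω‖) 2 P := by
      apply eLpNorm_mono_ae
      refine Filter.Eventually.of_forall fun ω => ?_
      rw [Real.norm_eq_abs, abs_of_nonneg (hF0 _), Real.norm_eq_abs,
        abs_of_nonneg (by positivity)]
      exact hFle _
    refine h1.trans_eq ?_
    have h2 : (fun ω => Cf * ‖g ω‖) = (Cf : ℝ) • fun ω => ‖g ω‖ := rfl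
    rw [h2, eLpNorm_const_smul, eLpNorm_norm]
    congr 1
    rw [← ofReal_norm, Real.norm_eq_abs, abs_of_nonneg hCfpos.le]
  set c : ℤ → ENNReal := fun t => eLpNorm (fun ω => F (u t ω)) 2 P with hcdef
  have hcfin : ∀ t, c t ≠ ⊤ := by
    intro t
    exact ((hFcomp (u t) (hu2 t).aestronglyMeasurable).trans_lt
      (ENNReal.mul_lt_top ENNReal.ofReal_lt_top (hu2 t).2)).ne
  have hclim : Tendsto c atTop (nhds 0) := by
    have hb := ENNReal.Tendsto.const_mul (a := ENNReal.ofReal Cf) hulim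
      (Or.inr ENNReal.ofReal_ne_top)
    rw [mul_zero] at hb
    exact tendsto_of_tendsto_of_tendsto_of_le_of_le tendsto_const_nhds hb
      (fun t => zero_le) (fun t => hFcomp (u t) (hu2 t).aestronglyMeasurable)
  set y : ℤ → ENNReal := fun t => eLpNorm (fun ω => F (d t ω)) 2 P with hydef
  have hyfin : ∀ t : ℤ, tstar ≤ t → y t ≠ ⊤ := by
    intro t ht
    exact ((hFcomp (d t) (hd2' t ht).aestronglyMeasurable).trans_lt
      (ENNReal.mul_lt_top ENNReal.ofReal_lt_top (hd2' t ht).2)).ne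
  -- the contraction factor and threshold time
  set ρ := (1 + ρ0) / 2 with hρdef
  have hρpos : 0 < ρ := by rw [hρdef]; linarith
  have hρlt1 : ρ < 1 := by rw [hρdef]; linarith
  set δ := (1 - ρ0) / (2 * Cf) with hδdef
  have hδpos : 0 < δ := by
    rw [hδdef]
    have h1 : 0 < 1 - ρ0 := by linarith
    positivity
  have hJstar0 : Tendsto (fun t => J t - Jstar) atTop (nhds 0) := by
    simpa using hJconv.sub (tendsto_const_nhds (x := Jstar))
  obtain ⟨T', hT'⟩ := eventually_atTop.mp
    ((KFCS.tendsto_matL_norm_zero hJstar0).eventually_lt_const hδpos)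
  set T0 : ℤ := max T' (tstar + 1) with hT0def
  have hT0tstar : tstar + 1 ≤ T0 := le_max_right _ _
  -- the key recursion for y
  have hkey : ∀ t : ℤ, T0 ≤ t → y t ≤ ENNReal.ofReal ρ * y (t - 1) + c t := by
    intro t ht
    have httstar : tstar < t := by omega
    have ht1 : tstar ≤ t - 1 := by omega
    have hptw : ∀ᵐ ω ∂P, F (d t ω) ≤ ρ * F (d (t - 1) ω) + F (u t ω) := by
      filter_upwards [hrec] with ω hω
      have hdt : d t ω = mulVecE (J t) (d (t - 1) ω) + u t ω := by
        rw [hω t httstar, hu]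
        simp only
        rw [add_assoc]
      have hcontr : ρ0 + Cf * ‖KFCS.matL (J t - Jstar)‖ ≤ ρ := by
        have hδt : ‖KFCS.matL (J t - Jstar)‖ ≤ δ :=
          (hT' t (le_trans (le_max_left _ _) ht)).le
        have h5 : Cf * ‖KFCS.matL (J t - Jstar)‖ ≤ Cf * δ :=
          mul_le_mul_of_nonneg_left hδt hCfpos.le
        have h6 : Cf * δ = (1 - ρ0) / 2 := by
          rw [hδdef]
          field_simp
        rw [hρdef]
        rw [h6] at h5
        linarith
      calc F (d t ω) = F (mulVecE (J t) (d (t - 1) ω) + u t ω) := by rw [hdt]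
        _ ≤ F (mulVecE (J t) (d (t - 1) ω)) + F (u t ω) := hFadd _ _
        _ ≤ (ρ0 + Cf * ‖KFCS.matL (J t - Jstar)‖) * F (d (t - 1) ω) + F (u t ω) :=
            add_le_add_left (hFmat _ _) _
        _ ≤ ρ * F (d (t - 1) ω) + F (u t ω) :=
            add_le_add_left (mul_le_mul_of_nonneg_right hcontr (hF0 _)) _
    have haesm1 : AEStronglyMeasurable (fun ω => ρ * F (d (t - 1) ω)) P :=
      (hFcont.comp_aestronglyMeasurable (hd2' _ ht1).aestronglyMeasurable).const_mul ρ
    have haesm2 : AEStronglyMeasurable (fun ω => F (u t ω)) P :=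
      hFcont.comp_aestronglyMeasurable (hu2 t).aestronglyMeasurable
    have h7 : y t ≤ eLpNorm (fun ω => ρ * F (d (t - 1) ω) + F (u t ω)) 2 P := by
      apply eLpNorm_mono_ae
      filter_upwards [hptw] with ω hω
      have hrhs : 0 ≤ ρ * F (d (t - 1) ω) + F (u t ω) :=
        add_nonneg (mul_nonneg hρpos.le (hF0 _)) (hF0 _)
      rw [Real.norm_eq_abs, abs_of_nonneg (hF0 _), Real.norm_eq_abs, abs_of_nonneg hrhs]
      exact hω
    have h8 : eLpNorm (fun ω => ρ * F (d (t - 1) ω) + F (u t ω)) 2 P ≤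
        eLpNorm (fun ω => ρ * F (d (t - 1) ω)) 2 P + c t :=
      eLpNorm_add_le haesm1 haesm2 one_le_two
    have h9 : eLpNorm (fun ω => ρ * F (d (t - 1) ω)) 2 P = ENNReal.ofReal ρ * y (t - 1) := by
      have h2 : (fun ω => ρ * F (d (t - 1) ω)) = (ρ : ℝ) • fun ω => F (d (t - 1) ω) := rfl
      rw [h2, eLpNorm_const_smul]
      congr 1
      rw [← ofReal_norm, Real.norm_eq_abs, abs_of_nonneg hρpos.le]
    exact h7.trans (h8.trans (by rw [h9]))
  -- pass to real numbers
  set xr : ℤ → ℝ := fun t => (y t).toReal with hxr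
  set cr : ℤ → ℝ := fun t => (c t).toReal with hcr
  have hrecR : ∀ t : ℤ, T0 < t → xr t ≤ ρ * xr (t - 1) + cr t := by
    intro t ht
    have h1 := hkey t ht.le
    have hmulfin : ENNReal.ofReal ρ * y (t - 1) ≠ ⊤ :=
      ENNReal.mul_ne_top ENNReal.ofReal_ne_top (hyfin (t - 1) (by omega))
    have hfin : ENNReal.ofReal ρ * y (t - 1) + c t ≠ ⊤ :=
      ENNReal.add_ne_top.mpr ⟨hmulfin, hcfin t⟩
    have h2 := ENNReal.toReal_mono hfin h1
    rwa [ENNReal.toReal_add hmulfin (hcfin t), ENNReal.toReal_mul,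
      ENNReal.toReal_ofReal hρpos.le] at h2
  have hcrlim : Tendsto cr atTop (nhds 0) := by
    have := (ENNReal.tendsto_toReal ENNReal.zero_ne_top).comp hclim
    simpa [hcr, Function.comp_def] using this
  have hxlim : Tendsto xr atTop (nhds 0) :=
    KFCS.scalar_decay hρpos.le hρlt1 T0 (fun t => ENNReal.toReal_nonneg) hrecR hcrlim
  -- mean-square convergence of d
  have hdle : ∀ t : ℤ, tstar ≤ t → (eLpNorm (d t) 2 P).toReal ≤ xr t := by
    intro t ht
    have h1 : eLpNorm (d t) 2 P ≤ y t := by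
      apply eLpNorm_mono_ae
      refine Filter.Eventually.of_forall fun ω => ?_
      rw [Real.norm_eq_abs, abs_of_nonneg (hF0 _)]
      exact hFnorm _
    exact ENNReal.toReal_mono (hyfin t ht) h1
  have hnto : Tendsto (fun t => (eLpNorm (d t) 2 P).toReal) atTop (nhds 0) := by
    apply tendsto_of_tendsto_of_tendsto_of_le_of_le' tendsto_const_nhds hxlim
    · exact Filter.Eventually.of_forall fun t => ENNReal.toReal_nonneg
    · exact eventually_atTop.mpr ⟨tstar, hdle⟩
  have hIto : Tendsto (fun t : ℤ => ∫ ω, ‖d t ω‖ ^ 2 ∂P) atTop (nhds 0) := by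
    have hsq : Tendsto (fun t => ((eLpNorm (d t) 2 P).toReal) ^ 2) atTop (nhds 0) := by
      have := hnto.pow 2
      simpa using this
    apply hsq.congr'
    exact eventually_atTop.mpr
      ⟨tstar, fun t ht => (KFCS.integral_sq_eq_toReal_sq (hd2' t ht)).symm⟩
  refine ⟨hIto, ?_⟩
  intro ε εerr hε hεerr
  have hev : ∀ᶠ t in atTop, (∫ ω, ‖d t ω‖ ^ 2 ∂P) < εerr * ε :=
    hIto.eventually_lt_const (by positivity)
  obtain ⟨T, hT⟩ := eventually_atTop.mp (hev.and (eventually_ge_atTop tstar))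
  refine ⟨max (T - tstar) 0, fun t ht => ?_⟩
  have hmax : T - tstar ≤ max (T - tstar) 0 := le_max_left _ _
  have htT : T ≤ t := by omega
  obtain ⟨hI, hts⟩ := hT t htT
  exact KFCS.prob_sq_le (hd2' t hts) hε hεerr hI
end
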